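/- Let f be a Boolean function on n variables and I₁ ⊆ I₂ ⊆ {0,…,n-1}. Then for every w ∈ 𝔽₂^{I₁}: vdeg_{I₁}(f)(w) = max_{w' ∈ 𝔽₂^{I₂∖I₁}} ( vdeg_{I₂}(f)(w ⊔ w') + wt(w') ), where w ⊔ w' ∈ 𝔽₂^{I₂} denotes the vector agreeing with w on I₁ and with w' on I₂ ∖ I₁, and the computation is in ℤ ∪ {-∞}. -/

import Mathlib

open Finset

section Core

variable {α : Type*}

/-- The monomial `x^u` over `𝔽₂`. -/
def monom [Fintype α] (u x : α → ZMod 2) : ZMod 2 :=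
  ∏ i, if u i = 1 then x i else 1

/-- The ANF coefficient of the monomial `x^u` in `f`, via Möbius inversion. -/
def anf [Fintype α] [DecidableEq α] (f : (α → ZMod 2) → ZMod 2) (u : α → ZMod 2) : ZMod 2 :=
  ∑ v ∈ Finset.univ.filter (fun v : α → ZMod 2 => ∀ i, v i = 1 → u i = 1), f v

/-- Hamming weight. -/
def wt [Fintype α] (u : α → ZMod 2) : ℕ :=
  (Finset.univ.filter (fun i => u i = 1)).card

/-- Algebraic degree, in `ℤ ∪ {-∞}`. -/
def deg [Fintype α] [DecidableEq α] (f : (α → ZMod 2) → ZMod 2) : WithBot ℤ :=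
  (Finset.univ.filter (fun u : α → ZMod 2 => anf f u = 1)).sup
    (fun u => ((wt u : ℤ) : WithBot ℤ))

/-- Combine an assignment on `I` with one on `Iᶜ` to a full assignment. -/
def combine [Fintype α] [DecidableEq α] (I : Finset α) (w : ↥I → ZMod 2)
    (y : ↥Iᶜ → ZMod 2) : α → ZMod 2 :=
  fun i => if h : i ∈ I then w ⟨i, h⟩ else y ⟨i, Finset.mem_compl.mpr h⟩

/-- The coefficient function `g_{f,w}` of `x_I^w` in `f`, a Boolean function of `x_{Iᶜ}`. -/
def coeffFun [Fintype α] [DecidableEq α] (f : (α → ZMod 2) → ZMod 2) (I : Finset α)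
    (w : ↥I → ZMod 2) : (↥Iᶜ → ZMod 2) → ZMod 2 :=
  fun y => ∑ t : ↥Iᶜ → ZMod 2, anf f (combine I w t) * monom t y

/-- The vector degree of `f` w.r.t. the index set `I`. -/
def vdeg [Fintype α] [DecidableEq α] (f : (α → ZMod 2) → ZMod 2) (I : Finset α)
    (w : ↥I → ZMod 2) : WithBot ℤ :=
  deg (coeffFun f I w)

/-- `f` with the variables outside `S` set to `0`. -/
def restrict0 [Fintype α] [DecidableEq α] (f : (α → ZMod 2) → ZMod 2) (S : Finset α) :
    (α → ZMod 2) → ZMod 2 :=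
  fun x => f (fun i => if i ∈ S then x i else 0)

/-- Combine an assignment on `I₁` with one on `I₂ \ I₁` to an assignment on `I₂`. -/
def joinFn [DecidableEq α] {I₁ I₂ : Finset α} (w : ↥I₁ → ZMod 2)
    (w' : ↥(I₂ \ I₁) → ZMod 2) : ↥I₂ → ZMod 2 :=
  fun j => if h : (j : α) ∈ I₁ then w ⟨(j : α), h⟩
           else w' ⟨(j : α), Finset.mem_sdiff.mpr ⟨j.2, h⟩⟩

end Core

/-- Coordinatewise OR of the family `W i`, over indices `i` with `u i = 1`. -/
def orFam {n : ℕ} {β : Type*} (u : Fin n → ZMod 2) (W : Fin n → β → ZMod 2) :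
    β → ZMod 2 :=
  fun j => if ∃ i, u i = 1 ∧ W i j = 1 then 1 else 0

/-- The vector numeric mapping `VDEG_d(f, V)`. -/
def VDEG {n : ℕ} {δ : Type*} [Fintype δ] [DecidableEq δ]
    (f : (Fin n → ZMod 2) → ZMod 2) (V : Fin n → (δ → ZMod 2) → WithBot ℤ)
    (w : δ → ZMod 2) : WithBot ℤ :=
  (Finset.univ.filter (fun p : (Fin n → ZMod 2) × (Fin n → δ → ZMod 2) =>
      anf f p.1 = 1 ∧ (∀ i, p.1 i = 0 → p.2 i = 0) ∧ w = orFam p.1 p.2)).sup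
    (fun p => ∑ i ∈ Finset.univ.filter (fun i => p.1 i = 1), V i (p.2 i))

/-- Monomial transition `π_u(x) → π_v(g(x))`. -/
def MonTrans {a b : ℕ} (g : (Fin a → ZMod 2) → (Fin b → ZMod 2))
    (u : Fin a → ZMod 2) (v : Fin b → ZMod 2) : Prop :=
  anf (fun x => monom v (g x)) u = 1

/-- Monomial trails from level `a` to level `b`, with fixed endpoints `u`, `v`
(trails are normalized to be `0` outside the levels `a, …, b`). -/
def Trails (n : ℕ → ℕ) (f : ∀ i, (Fin (n i) → ZMod 2) → (Fin (n (i + 1)) → ZMod 2))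
    (a b : ℕ) (u : Fin (n a) → ZMod 2) (v : Fin (n b) → ZMod 2) :
    Set (∀ i, Fin (n i) → ZMod 2) :=
  {t | t a = u ∧ t b = v ∧ (∀ i, a ≤ i → i < b → MonTrans (f i) (t i) (t (i + 1))) ∧
       (∀ i, i < a → t i = fun _ => 0) ∧ (∀ i, b < i → t i = fun _ => 0)}

/-- The iterated composition `f_{b-1} ∘ ⋯ ∘ f_a` (meaningful for `a ≤ b`). -/
def iterComp (n : ℕ → ℕ) (f : ∀ i, (Fin (n i) → ZMod 2) → (Fin (n (i + 1)) → ZMod 2))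
    (a : ℕ) : (b : ℕ) → (Fin (n a) → ZMod 2) → (Fin (n b) → ZMod 2)
  | 0 => fun x j => if h : a = 0 then x (Fin.cast (show n 0 = n a by rw [h]) j) else 0
  | b + 1 =>
      if h : a = b + 1 then fun x j => x (Fin.cast (show n (b + 1) = n a by rw [h]) j)
      else fun x => f b (iterComp n f a b x)

section Iterated

/-- Embed an index set `J ⊆ {0,…,n-1}` into the joint index set of size `n' 0 = n + m`. -/
def liftJ {n m N0 : ℕ} (h0 : N0 = n + m) (J : Finset (Fin n)) : Finset (Fin N0) :=
  J.image (fun (j : Fin n) => (⟨j.val, by have := j.isLt; omega⟩ : Fin N0))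

/-- Set the `x`-variables outside `S` to zero in a joint assignment. -/
def mask0 {n m N0 : ℕ} (h0 : N0 = n + m) (S : Finset (Fin n)) (z : Fin N0 → ZMod 2) :
    Fin N0 → ZMod 2 :=
  fun i => if h : (i : ℕ) < n then (if (⟨(i : ℕ), h⟩ : Fin n) ∈ S then z i else 0) else z i

/-- The iterated estimated vector degrees `V_t^S`. -/
def Vt {n m : ℕ} (n' : ℕ → ℕ) (h0 : n' 0 = n + m)
    (f : ∀ t, (Fin (n' t) → ZMod 2) → (Fin (n' (t + 1)) → ZMod 2))
    (J S : Finset (Fin n)) :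
    (t : ℕ) → Fin (n' (t + 1)) → (↥(liftJ h0 J) → ZMod 2) → WithBot ℤ
  | 0 => fun i => vdeg (fun z => f 0 (mask0 h0 S z) i) (liftJ h0 J)
  | t + 1 => fun i => VDEG (fun y => f (t + 1) y i) (Vt n' h0 f J S t)

/-- The estimated vector degree `vdeg-hat^S` (here `r = s + 2`). -/
def vdegHat {n m : ℕ} (n' : ℕ → ℕ) (h0 : n' 0 = n + m)
    (f : ∀ t, (Fin (n' t) → ZMod 2) → (Fin (n' (t + 1)) → ZMod 2))
    (J : Finset (Fin n)) (s : ℕ) (S : Finset (Fin n)) :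
    (↥(liftJ h0 J) → ZMod 2) → WithBot ℤ :=
  VDEG (fun y => monom (fun _ => 1) (f (s + 1) y)) (Vt n' h0 f J S s)

/-- The estimated degree `deg-hat^S`. -/
noncomputable def degHat {n m : ℕ} (n' : ℕ → ℕ) (h0 : n' 0 = n + m)
    (f : ∀ t, (Fin (n' t) → ZMod 2) → (Fin (n' (t + 1)) → ZMod 2))
    (J : Finset (Fin n)) (s : ℕ) (S : Finset (Fin n)) : WithBot ℤ :=
  Finset.univ.sup (fun w : ↥(liftJ h0 J) → ZMod 2 =>
    vdegHat n' h0 f J s S w + ((wt w : ℤ) : WithBot ℤ))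

end Iterated

section Aux

variable {β : Type*} [Fintype β] [DecidableEq β]

lemma monom_eq_ite (t v : β → ZMod 2) :
    monom t v = if ∀ i, t i = 1 → v i = 1 then 1 else 0 := by
  unfold monom
  split
  · next hh =>
    apply Finset.prod_eq_one
    intro i _
    split
    · exact hh i ‹_›
    · rfl
  · next hh =>
    push_neg at hh
    obtain ⟨i, hti, hvi⟩ := hh
    apply Finset.prod_eq_zero (Finset.mem_univ i)
    rw [if_pos hti]
    revert hvi; generalize v i = a; revert a; decide

lemma sum_monom_interval (t u : β → ZMod 2) :
    ∑ v ∈ Finset.univ.filter (fun v : β → ZMod 2 => ∀ i, v i = 1 → u i = 1), monom t v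
      = if t = u then 1 else 0 := by
  split
  · next hh =>
    subst hh
    rw [Finset.sum_eq_single_of_mem t (by simp)]
    · rw [monom_eq_ite, if_pos (fun _ h => h)]
    · intro v hv hne
      rw [monom_eq_ite, if_neg]
      intro hle
      apply hne
      simp only [Finset.mem_filter] at hv
      funext i
      have h1 := hv.2 i
      have h2 := hle i
      revert h1 h2; generalize v i = a; generalize t i = b; revert a b; decide
  · next hne =>
    by_cases hle : ∀ i, t i = 1 → u i = 1
    · -- t ≼ u, t ≠ u : involution flipping at a coordinate where they differ
      have hex : ∃ i₀, t i₀ = 0 ∧ u i₀ = 1 := by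
        by_contra hc
        push_neg at hc
        apply hne
        funext i
        have h1 := hle i
        have h2 := hc i
        revert h1 h2; generalize t i = a; generalize u i = b; revert a b; decide
      obtain ⟨i₀, hti₀, hui₀⟩ := hex
      apply Finset.sum_involution
        (g := fun v _ => Function.update v i₀ (v i₀ + 1))
      · intro v _
        have : monom t (Function.update v i₀ (v i₀ + 1)) = monom t v := by
          unfold monom
          apply Finset.prod_congr rfl
          intro i _
          by_cases hi : i = i₀
          · subst hi; rw [if_neg (by rw [hti₀]; decide), if_neg (by rw [hti₀]; decide)]
          · rw [Function.update_of_ne hi]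
        rw [this]
        generalize monom t v = a; revert a; decide
      · intro v _ _
        intro hcc
        have := congrFun hcc i₀
        rw [Function.update_self] at this
        revert this; generalize v i₀ = a; revert a; decide
      ·
        intro v _
        funext i
        by_cases h12 : i = i₀
        · subst h12
          rw [Function.update_self, Function.update_self]
          generalize v i = a; revert a; decide
        · simp [Function.update_of_ne h12]
      ·
        intro v hv
        simp only [Finset.mem_filter, Finset.mem_univ, true_and] at hv ⊢
        intro i hi
        by_cases h12 : i = i₀
        · subst h12; exact hui₀
        · rw [Function.update_of_ne h12] at hi; exact hv i hi
    · apply Finset.sum_eq_zero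
      intro v hv
      simp only [Finset.mem_filter, Finset.mem_univ, true_and] at hv
      rw [monom_eq_ite, if_neg]
      intro hc
      exact hle (fun i hi => hv i (hc i hi))

lemma anf_sum (c : (β → ZMod 2) → ZMod 2) (u : β → ZMod 2) :
    anf (fun y => ∑ t : β → ZMod 2, c t * monom t y) u = c u := by
  unfold anf
  rw [Finset.sum_comm]
  have : ∀ t : β → ZMod 2,
      (∑ v ∈ Finset.univ.filter (fun v : β → ZMod 2 => ∀ i, v i = 1 → u i = 1),
        c t * monom t v) = if t = u then c t else 0 := by
    intro t
    rw [← Finset.mul_sum, sum_monom_interval]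
    split <;> simp
  simp only [this]
  simp

end Aux


section Aux2

variable {n : ℕ}

set_option linter.unusedSectionVars false

lemma anf_coeffFun (f : (Fin n → ZMod 2) → ZMod 2) (I : Finset (Fin n))
    (w : ↥I → ZMod 2) (t : ↥Iᶜ → ZMod 2) :
    anf (coeffFun f I w) t = anf f (combine I w t) :=
  anf_sum (fun t => anf f (combine I w t)) t

lemma vdeg_eq (f : (Fin n → ZMod 2) → ZMod 2) (I : Finset (Fin n)) (w : ↥I → ZMod 2) :
    vdeg f I w = (Finset.univ.filter
        (fun t : ↥Iᶜ → ZMod 2 => anf f (combine I w t) = 1)).sup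
      (fun t => ((wt t : ℤ) : WithBot ℤ)) := by
  unfold vdeg deg
  congr 1
  apply Finset.filter_congr
  intro t _
  rw [anf_coeffFun]

/-- Recombine `w'` on `I₂ \ I₁` and `s` on `I₂ᶜ` into a function on `I₁ᶜ`. -/
def splitT {I₁ I₂ : Finset (Fin n)} (h : I₁ ⊆ I₂) (w' : ↥(I₂ \ I₁) → ZMod 2)
    (s : ↥I₂ᶜ → ZMod 2) : ↥I₁ᶜ → ZMod 2 :=
  fun j => if h2 : (j : Fin n) ∈ I₂ then
      w' ⟨(j : Fin n), Finset.mem_sdiff.mpr ⟨h2, Finset.mem_compl.mp j.2⟩⟩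
    else s ⟨(j : Fin n), Finset.mem_compl.mpr h2⟩

lemma combine_splitT (f : (Fin n → ZMod 2) → ZMod 2) {I₁ I₂ : Finset (Fin n)}
    (h : I₁ ⊆ I₂) (w : ↥I₁ → ZMod 2) (w' : ↥(I₂ \ I₁) → ZMod 2) (s : ↥I₂ᶜ → ZMod 2) :
    combine I₁ w (splitT h w' s) = combine I₂ (joinFn w w') s := by
  funext i
  unfold combine splitT joinFn
  by_cases h1 : i ∈ I₁
  · rw [dif_pos h1, dif_pos (h h1), dif_pos h1]
  · rw [dif_neg h1]
    by_cases h2 : i ∈ I₂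
    · rw [dif_pos h2, dif_pos h2, dif_neg h1]
    · rw [dif_neg h2, dif_neg h2]

lemma eq_splitT {I₁ I₂ : Finset (Fin n)} (h : I₁ ⊆ I₂) (t : ↥I₁ᶜ → ZMod 2) :
    t = splitT h
      (fun j => t ⟨(j : Fin n), Finset.mem_compl.mpr (Finset.mem_sdiff.mp j.2).2⟩)
      (fun j => t ⟨(j : Fin n),
        Finset.mem_compl.mpr (fun hj => Finset.mem_compl.mp j.2 (h hj))⟩) := by
  funext j
  unfold splitT
  by_cases h2 : (j : Fin n) ∈ I₂
  · rw [dif_pos h2]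
  · rw [dif_neg h2]

lemma wt_splitT {I₁ I₂ : Finset (Fin n)} (h : I₁ ⊆ I₂) (w' : ↥(I₂ \ I₁) → ZMod 2)
    (s : ↥I₂ᶜ → ZMod 2) : wt (splitT h w' s) = wt w' + wt s := by
  classical
  unfold wt
  rw [← Finset.card_filter_add_card_filter_not
    (s := Finset.univ.filter (fun j : ↥I₁ᶜ => splitT h w' s j = 1))
    (p := fun j : ↥I₁ᶜ => (j : Fin n) ∈ I₂)]
  congr 1
  · apply Finset.card_bij'
      (i := fun (j : ↥I₁ᶜ) (hj : j ∈ (Finset.univ.filter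
          (fun j : ↥I₁ᶜ => splitT h w' s j = 1)).filter
          (fun j : ↥I₁ᶜ => (j : Fin n) ∈ I₂)) =>
        (⟨(j : Fin n), Finset.mem_sdiff.mpr
          ⟨(Finset.mem_filter.mp hj).2, Finset.mem_compl.mp j.2⟩⟩ : ↥(I₂ \ I₁)))
      (j := fun (k : ↥(I₂ \ I₁)) (_ : k ∈ Finset.univ.filter
          (fun k : ↥(I₂ \ I₁) => w' k = 1)) =>
        (⟨(k : Fin n), Finset.mem_compl.mpr (Finset.mem_sdiff.mp k.2).2⟩ : ↥I₁ᶜ))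
    · intro j hj
      simp only [Finset.mem_filter, Finset.mem_univ, true_and] at hj ⊢
      have := hj.1
      unfold splitT at this
      rwa [dif_pos hj.2] at this
    · intro j hj; rfl
    · intro k hk; rfl
    · intro k hk
      simp only [Finset.mem_filter, Finset.mem_univ, true_and] at hk ⊢
      refine ⟨?_, (Finset.mem_sdiff.mp k.2).1⟩
      unfold splitT
      rw [dif_pos (Finset.mem_sdiff.mp k.2).1]
      exact hk
  · apply Finset.card_bij'
      (i := fun (j : ↥I₁ᶜ) (hj : j ∈ (Finset.univ.filter
          (fun j : ↥I₁ᶜ => splitT h w' s j = 1)).filter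
          (fun j : ↥I₁ᶜ => ¬ (j : Fin n) ∈ I₂)) =>
        (⟨(j : Fin n), Finset.mem_compl.mpr (Finset.mem_filter.mp hj).2⟩ : ↥I₂ᶜ))
      (j := fun (k : ↥I₂ᶜ) (_ : k ∈ Finset.univ.filter
          (fun k : ↥I₂ᶜ => s k = 1)) =>
        (⟨(k : Fin n), Finset.mem_compl.mpr
          (fun hj => Finset.mem_compl.mp k.2 (h hj))⟩ : ↥I₁ᶜ))
    · intro j hj
      simp only [Finset.mem_filter, Finset.mem_univ, true_and] at hj ⊢
      have := hj.1
      unfold splitT at this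
      rwa [dif_neg hj.2] at this
    · intro j hj; rfl
    · intro k hk; rfl
    · intro k hk
      simp only [Finset.mem_filter, Finset.mem_univ, true_and] at hk ⊢
      refine ⟨?_, Finset.mem_compl.mp k.2⟩
      unfold splitT
      rw [dif_neg (Finset.mem_compl.mp k.2)]
      exact hk

lemma sup_add_const {γ : Type*} (S : Finset γ) (g : γ → WithBot ℤ) (c : WithBot ℤ) :
    S.sup (fun x => g x + c) = S.sup g + c := by
  induction S using Finset.cons_induction with
  | empty => simp
  | cons a S ha ih =>
    rw [Finset.sup_cons, Finset.sup_cons, ih]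
    rcases le_total (g a) (S.sup g) with hc | hc
    · rw [sup_of_le_right hc, sup_of_le_right (show g a + c ≤ S.sup g + c by gcongr)]
    · rw [sup_of_le_left hc, sup_of_le_left (show S.sup g + c ≤ g a + c by gcongr)]

end Aux2

/-- For `I₁ ⊆ I₂`, the vector degree w.r.t. `I₁` is determined by the
vector degree w.r.t. `I₂`. -/
theorem vdeg_subset_eq {n : ℕ} (f : (Fin n → ZMod 2) → ZMod 2)
    (I₁ I₂ : Finset (Fin n)) (h : I₁ ⊆ I₂) (w : ↥I₁ → ZMod 2) :
    vdeg f I₁ w = Finset.univ.sup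
      (fun w' : ↥(I₂ \ I₁) → ZMod 2 =>
        vdeg f I₂ (joinFn w w') + ((wt w' : ℤ) : WithBot ℤ)) := by
  classical
  have hR : ∀ w' : ↥(I₂ \ I₁) → ZMod 2,
      vdeg f I₂ (joinFn w w') + ((wt w' : ℤ) : WithBot ℤ) =
      (Finset.univ.filter
        (fun s : ↥I₂ᶜ → ZMod 2 => anf f (combine I₂ (joinFn w w') s) = 1)).sup
        (fun s => ((wt s : ℤ) : WithBot ℤ) + ((wt w' : ℤ) : WithBot ℤ)) := by
    intro w'
    rw [vdeg_eq, sup_add_const]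
  rw [vdeg_eq]
  apply le_antisymm
  · apply Finset.sup_le
    intro t ht
    rw [Finset.mem_filter] at ht
    set w' : ↥(I₂ \ I₁) → ZMod 2 :=
      fun j => t ⟨(j : Fin n), Finset.mem_compl.mpr (Finset.mem_sdiff.mp j.2).2⟩ with hw'
    set s : ↥I₂ᶜ → ZMod 2 :=
      fun j => t ⟨(j : Fin n),
        Finset.mem_compl.mpr (fun hj => Finset.mem_compl.mp j.2 (h hj))⟩ with hs
    have hts : t = splitT h w' s := eq_splitT h t
    refine le_trans ?_ (Finset.le_sup (Finset.mem_univ w'))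
    rw [hR w']
    have hmem : s ∈ Finset.univ.filter
        (fun s : ↥I₂ᶜ → ZMod 2 => anf f (combine I₂ (joinFn w w') s) = 1) := by
      rw [Finset.mem_filter]
      refine ⟨Finset.mem_univ s, ?_⟩
      rw [← combine_splitT f h w w' s, ← hts]
      exact ht.2
    refine le_trans ?_ (Finset.le_sup hmem)
    have : wt t = wt w' + wt s := by rw [hts, wt_splitT]
    rw [this]
    push_cast
    rw [add_comm]
  · apply Finset.sup_le
    intro w' _
    rw [hR w']
    apply Finset.sup_le
    intro s hs
    rw [Finset.mem_filter] at hs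
    have hmem : splitT h w' s ∈ Finset.univ.filter
        (fun t : ↥I₁ᶜ → ZMod 2 => anf f (combine I₁ w t) = 1) := by
      rw [Finset.mem_filter]
      refine ⟨Finset.mem_univ _, ?_⟩
      rw [combine_splitT f h w w' s]
      exact hs.2
    refine le_trans ?_ (Finset.le_sup hmem)
    have : wt (splitT h w' s) = wt w' + wt s := wt_splitT h w' s
    rw [this]
    push_cast
    rw [add_comm]
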